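/- In a unital associative Banach algebra, the curve α(t) = x^{1/2} exp(t·x^{−1/2} v x^{−1/2}) x^{1/2} satisfies the geodesic equation α'' = α' α⁻¹ α' whenever x is positive invertible with square root x^{1/2}, and has α(0) = x, α'(0) = v. -/

import Mathlib

open NormedSpace

/-- In a unital C*-algebra, for `x` positive invertible with square root
`x^{1/2} = s` and `v` self-adjoint, the curve
`α(t) = x^{1/2} exp(t x^{−1/2} v x^{−1/2}) x^{1/2}` satisfies `α(0) = x`,
`α'(0) = v`, and the geodesic equation `α'' = α' α⁻¹ α'`. -/
theorem stmt11 (A : Type*) [NormedRing A] [StarRing A] [CStarRing A]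
    [NormedAlgebra ℝ A] [CompleteSpace A]
    (s : Aˣ) (hs : IsSelfAdjoint (s : A)) (hpos : spectrum ℝ (s : A) ⊆ Set.Ioi 0)
    (x : A) (hx : x = (s : A) * (s : A))
    (v : A) (hv : IsSelfAdjoint v)
    (α : ℝ → A)
    (hα : ∀ t : ℝ, α t = (s : A) * exp (t • ((↑s⁻¹ : A) * v * (↑s⁻¹ : A))) * (s : A)) :
    α 0 = x ∧ deriv α 0 = v ∧
    ∀ t : ℝ, deriv (deriv α) t = deriv α t * Ring.inverse (α t) * deriv α t := by
  set w : A := (↑s⁻¹ : A) * v * (↑s⁻¹ : A) with hw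
  have hαe : α = fun t : ℝ => (s : A) * exp (t • w) * (s : A) := funext hα
  subst hαe
  -- first derivative
  have hd : ∀ t : ℝ, HasDerivAt (fun t : ℝ => (s : A) * exp (t • w) * (s : A))
      ((s : A) * (w * exp (t • w)) * (s : A)) t := fun t =>
    ((hasDerivAt_exp_smul_const' w t).const_mul _).mul_const _
  have hderiv : deriv (fun t : ℝ => (s : A) * exp (t • w) * (s : A))
      = fun t : ℝ => (s : A) * (w * exp (t • w)) * (s : A) :=
    funext fun t => (hd t).deriv
  have hd2 : ∀ t : ℝ, HasDerivAt (fun t : ℝ => (s : A) * (w * exp (t • w)) * (s : A))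
      ((s : A) * (w * (w * exp (t • w))) * (s : A)) t := fun t =>
    (((hasDerivAt_exp_smul_const' w t).const_mul w).const_mul _).mul_const _
  refine ⟨by simp [hx], ?_, ?_⟩
  · rw [hderiv]
    simp only [zero_smul, exp_zero, mul_one]
    rw [hw]
    simp [mul_assoc]
  · intro t
    set e : A := exp (t • w) with he
    set e' : A := exp (-(t • w)) with he'
    have hee : e * e' = 1 := by
      let +nondep : NormedAlgebra ℚ A := .restrictScalars ℚ ℝ A
      rw [he, he', ← exp_add_of_commute ((Commute.refl (t • w)).neg_right), add_neg_cancel,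
        exp_zero]
    have he'e : e' * e = 1 := by
      let +nondep : NormedAlgebra ℚ A := .restrictScalars ℚ ℝ A
      rw [he, he', ← exp_add_of_commute ((Commute.refl (t • w)).neg_left), neg_add_cancel,
        exp_zero]
    have hcl : ∀ b : A, e * (e' * b) = b := fun b => by rw [← mul_assoc, hee, one_mul]
    have hcl' : ∀ b : A, e' * (e * b) = b := fun b => by rw [← mul_assoc, he'e, one_mul]
    let u : Aˣ := ⟨(s : A) * e * (s : A), (↑s⁻¹ : A) * e' * (↑s⁻¹ : A), by
        simp only [mul_assoc, Units.mul_inv_cancel_left, Units.inv_mul_cancel_left, hcl]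
        exact s.mul_inv, by
        simp only [mul_assoc, Units.mul_inv_cancel_left, Units.inv_mul_cancel_left, hcl']
        exact s.inv_mul⟩
    have hinv : Ring.inverse ((s : A) * e * (s : A)) = (↑s⁻¹ : A) * e' * (↑s⁻¹ : A) :=
      Ring.inverse_unit u
    rw [hderiv, (hd2 t).deriv, hinv, ← he]
    simp only [mul_assoc, Units.mul_inv_cancel_left, Units.inv_mul_cancel_left, hcl]
    change _ = (s : A) * (w * (e * (e' * (w * (e * (s : A))))))
    rw [hcl]
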